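/- One-sided concentration for a normal sequence (upper tail): Let p be a probability measure on a measurable space 𝒳 and k a measurable kernel with 0 ≤ k(x,y) ≤ K. Let m ≥ 2, let X and Y be two independent i.i.d. m-samples from p, and let δ > 0. Then P( MMD_u²[X,Y] > δ ) ≤ exp( − m δ² / (16K²) ). -/

import Mathlib

open MeasureTheory ProbabilityTheory Filter

lemma hoeff_core (q : ℝ) (hq0 : 0 ≤ q) (hq1 : q ≤ 1) (h : ℝ) :
    1 - q + q * Real.exp h ≤ Real.exp (q * h + h ^ 2 / 8) := by
  set D : ℝ → ℝ := fun x => 1 - q + q * Real.exp x with hDdef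
  have hD : ∀ x : ℝ, 0 < D x := by
    intro x
    rcases eq_or_lt_of_le hq0 with h0 | h0
    · simp only [hDdef, ← h0]
      norm_num
    · have h2 : 0 < q * Real.exp x := mul_pos h0 (Real.exp_pos x)
      simp only [hDdef]; linarith
  set φ : ℝ → ℝ := fun x => q * x + x ^ 2 / 8 - Real.log (D x) with hφdef
  set ψ : ℝ → ℝ := fun x => q + x / 4 - q * Real.exp x / D x with hψdef
  have hDd : ∀ x : ℝ, HasDerivAt D (q * Real.exp x) x := by
    intro x
    exact ((Real.hasDerivAt_exp x).const_mul q).const_add (1 - q)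
  have hφd : ∀ x : ℝ, HasDerivAt φ (ψ x) x := by
    intro x
    have h1 : HasDerivAt (fun x : ℝ => q * x + x ^ 2 / 8) (q + x / 4) x := by
      have := ((hasDerivAt_id x).const_mul q).add ((hasDerivAt_pow 2 x).div_const 8)
      refine this.congr_deriv ?_
      norm_num
      ring
    have h2 : HasDerivAt (fun x => Real.log (D x)) (q * Real.exp x / D x) x :=
      (hDd x).log (hD x).ne'
    exact h1.sub h2
  have hψd : ∀ x : ℝ, HasDerivAt ψ
      (1 / 4 - (q * Real.exp x * D x - q * Real.exp x * (q * Real.exp x)) / D x ^ 2) x := by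
    intro x
    have h1 : HasDerivAt (fun x : ℝ => q + x / 4) (1 / 4) x := by
      simpa using ((hasDerivAt_id x).div_const 4).const_add q
    have h2 : HasDerivAt (fun x => q * Real.exp x / D x)
        ((q * Real.exp x * D x - q * Real.exp x * (q * Real.exp x)) / D x ^ 2) x :=
      ((Real.hasDerivAt_exp x).const_mul q).div (hDd x) (hD x).ne'
    exact h1.sub h2
  have hψnn : ∀ x : ℝ,
      0 ≤ 1 / 4 - (q * Real.exp x * D x - q * Real.exp x * (q * Real.exp x)) / D x ^ 2 := by
    intro x
    have hDx := hD x
    have hN : q * Real.exp x * D x - q * Real.exp x * (q * Real.exp x) ≤ D x ^ 2 / 4 := by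
      simp only [hDdef]
      nlinarith [sq_nonneg ((1 - q) - q * Real.exp x)]
    have h2 : (q * Real.exp x * D x - q * Real.exp x * (q * Real.exp x)) / D x ^ 2 ≤ 1 / 4 := by
      rw [div_le_iff₀ (by positivity)]
      linarith
    linarith
  have hψmono : Monotone ψ := by
    apply monotone_of_deriv_nonneg (fun x => (hψd x).differentiableAt)
    intro x
    rw [(hψd x).deriv]
    exact hψnn x
  have hψ0 : ψ 0 = 0 := by
    simp only [hψdef, hDdef, Real.exp_zero]
    norm_num
  have hφdiff : Differentiable ℝ φ := fun x => (hφd x).differentiableAt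
  have hφ0 : φ 0 = 0 := by
    simp only [hφdef, hDdef, Real.exp_zero]
    norm_num
  have hmain : ∀ x : ℝ, 0 ≤ φ x := by
    have hmono : MonotoneOn φ (Set.Ici 0) := by
      apply monotoneOn_of_deriv_nonneg (convex_Ici 0) hφdiff.continuous.continuousOn
        (fun x _ => (hφd x).differentiableAt.differentiableWithinAt)
      intro x hx
      rw [(hφd x).deriv]
      rw [interior_Ici] at hx
      calc (0:ℝ) = ψ 0 := hψ0.symm
        _ ≤ ψ x := hψmono (le_of_lt hx)
    have hanti : AntitoneOn φ (Set.Iic 0) := by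
      apply antitoneOn_of_deriv_nonpos (convex_Iic 0) hφdiff.continuous.continuousOn
        (fun x _ => (hφd x).differentiableAt.differentiableWithinAt)
      intro x hx
      rw [(hφd x).deriv]
      rw [interior_Iic] at hx
      calc ψ x ≤ ψ 0 := hψmono (le_of_lt hx)
        _ = 0 := hψ0
    intro x
    rcases le_total 0 x with hx | hx
    · have := hmono Set.self_mem_Ici hx hx
      rwa [hφ0] at this
    · have := hanti hx Set.self_mem_Iic hx
      rwa [hφ0] at this
  have hlog : Real.log (D h) ≤ q * h + h ^ 2 / 8 := by
    have := hmain h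
    simp only [hφdef] at this
    linarith
  calc D h = Real.exp (Real.log (D h)) := (Real.exp_log (hD h)).symm
    _ ≤ Real.exp (q * h + h ^ 2 / 8) := Real.exp_le_exp.mpr hlog

lemma integrable_of_abs_le {α : Type*} [MeasurableSpace α] {μ : Measure α} [IsFiniteMeasure μ]
    {h : α → ℝ} (hm : AEStronglyMeasurable h μ) {M : ℝ} (hb : ∀ x, |h x| ≤ M) :
    Integrable h μ :=
  (integrable_const M).mono' hm (Filter.Eventually.of_forall fun x => by
    simpa [Real.norm_eq_abs] using hb x)



lemma hoeffding_mgf' {α : Type*} [MeasurableSpace α] (μ : Measure α) [IsProbabilityMeasure μ]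
    {Z : α → ℝ} (hm : AEStronglyMeasurable Z μ) (t c : ℝ)
    (hosc : ∀ x y, Z x - Z y ≤ c) (hmean : ∫ x, Z x ∂μ = 0) :
    ∫ x, Real.exp (t * Z x) ∂μ ≤ Real.exp (t ^ 2 * c ^ 2 / 8) := by
  haveI hne : Nonempty α := by
    by_contra hh
    rw [not_nonempty_iff] at hh
    have h1 : μ Set.univ = 1 := measure_univ
    rw [Set.univ_eq_empty_iff.mpr hh, measure_empty] at h1
    exact zero_ne_one h1
  obtain ⟨x₀⟩ := id hne
  have hc0 : 0 ≤ c := by have := hosc x₀ x₀; linarith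
  have hbdd : BddAbove (Set.range Z) := ⟨Z x₀ + c, by
    rintro _ ⟨y, rfl⟩
    have := hosc y x₀
    linarith⟩
  set b := sSup (Set.range Z) with hbdef
  set a := b - c with hadef
  have hZb : ∀ x, Z x ≤ b := fun x => le_csSup hbdd (Set.mem_range_self x)
  have hZa : ∀ x, a ≤ Z x := by
    intro x
    have h1 : b ≤ Z x + c := by
      apply csSup_le (Set.range_nonempty Z)
      rintro _ ⟨y, rfl⟩
      have := hosc y x
      linarith
    simp only [hadef]; linarith
  have hZabs : ∀ x, |Z x| ≤ |a| + |b| := by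
    intro x
    have h1 := hZa x; have h2 := hZb x
    have := le_abs_self b; have := neg_abs_le a
    rw [abs_le]; constructor <;> linarith [abs_nonneg a, abs_nonneg b]
  have hZint : Integrable Z μ := integrable_of_abs_le hm hZabs
  have ha0 : a ≤ 0 := by
    have h1 : ∫ x, (fun _ => a) x ∂μ ≤ ∫ x, Z x ∂μ := integral_mono (integrable_const a) hZint hZa
    rwa [integral_const, probReal_univ, smul_eq_mul, one_mul, hmean] at h1
  have hb0 : 0 ≤ b := by
    have h1 : ∫ x, Z x ∂μ ≤ ∫ x, (fun _ => b) x ∂μ := integral_mono hZint (integrable_const b) hZb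
    rwa [integral_const, probReal_univ, smul_eq_mul, one_mul, hmean] at h1
  rcases eq_or_lt_of_le hc0 with hc | hc
  · -- c = 0
    have hb' : b = 0 := le_antisymm (by simp only [hadef, ← hc] at ha0; linarith) hb0
    have hZ0 : ∀ x, Z x = 0 := by
      intro x
      have h1 := hZa x; have h2 := hZb x
      simp only [hadef, ← hc, hb'] at h1 h2 ⊢
      linarith
    calc ∫ x, Real.exp (t * Z x) ∂μ = ∫ _x, (1:ℝ) ∂μ := by
          apply integral_congr_ae (Filter.Eventually.of_forall fun x => ?_)
          rw [hZ0 x, mul_zero, Real.exp_zero]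
      _ = 1 := by simp
      _ ≤ Real.exp (t ^ 2 * c ^ 2 / 8) := Real.one_le_exp (by positivity)
  · -- 0 < c
    have hba : 0 < b - a := by simp only [hadef]; linarith
    set C1 := (b * Real.exp (t * a) - a * Real.exp (t * b)) / (b - a) with hC1def
    set C2 := (Real.exp (t * b) - Real.exp (t * a)) / (b - a) with hC2def
    have key : ∀ x, Real.exp (t * Z x) ≤ C1 + C2 * Z x := by
      intro x
      have hz1 := hZa x; have hz2 := hZb x
      set lam := (b - Z x) / (b - a) with hlam
      set mu := (Z x - a) / (b - a) with hmu
      have h1 : 0 ≤ lam := div_nonneg (by linarith) hba.le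
      have h2 : 0 ≤ mu := div_nonneg (by linarith) hba.le
      have h3 : lam + mu = 1 := by
        simp only [hlam, hmu]
        field_simp
        ring
      have hcx := convexOn_exp.2 (Set.mem_univ (t * a)) (Set.mem_univ (t * b)) h1 h2 h3
      simp only [smul_eq_mul] at hcx
      have harg : lam * (t * a) + mu * (t * b) = t * Z x := by
        simp only [hlam, hmu]
        field_simp
        ring
      rw [harg] at hcx
      refine hcx.trans (le_of_eq ?_)
      simp only [hlam, hmu, hC1def, hC2def]
      field_simp
      ring
    have hexpint : Integrable (fun x => Real.exp (t * Z x)) μ := by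
      apply integrable_of_abs_le (M := Real.exp (|t| * (|a| + |b|)))
        ((Real.continuous_exp.comp (continuous_const.mul continuous_id)).comp_aestronglyMeasurable hm)
      intro x
      simp only [Function.comp_apply, id_eq]
      rw [abs_of_pos (Real.exp_pos _)]
      apply Real.exp_le_exp.mpr
      calc t * Z x ≤ |t * Z x| := le_abs_self _
        _ = |t| * |Z x| := abs_mul t (Z x)
        _ ≤ |t| * (|a| + |b|) := mul_le_mul_of_nonneg_left (hZabs x) (abs_nonneg t)
    have hIm : ∫ x, Real.exp (t * Z x) ∂μ ≤ C1 := by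
      have h1 : ∫ x, Real.exp (t * Z x) ∂μ ≤ ∫ x, (C1 + C2 * Z x) ∂μ :=
        integral_mono hexpint ((integrable_const C1).add (hZint.const_mul C2)) key
      rwa [integral_add (integrable_const C1) (hZint.const_mul C2), integral_const,
        integral_const_mul, hmean, mul_zero, add_zero, probReal_univ,
        smul_eq_mul, one_mul] at h1
    -- analytic bound on C1
    have hq0' : 0 ≤ -a / c := div_nonneg (by linarith) hc0
    have hq1' : -a / c ≤ 1 := by
      rw [div_le_one hc]
      simp only [hadef]
      linarith
    have hcore := hoeff_core (-a / c) hq0' hq1' (t * c)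
    have hbac : b - a = c := by simp only [hadef]; ring
    have hC1eq : C1 = Real.exp (t * a) * (1 - -a / c + -a / c * Real.exp (t * c)) := by
      simp only [hC1def, hbac]
      have hb' : b = a + c := by simp only [hadef]; ring
      rw [hb', show t * (a + c) = t * a + t * c by ring, Real.exp_add]
      field_simp
      ring
    have hfinal : C1 ≤ Real.exp (t ^ 2 * c ^ 2 / 8) := by
      rw [hC1eq]
      calc Real.exp (t * a) * (1 - -a / c + -a / c * Real.exp (t * c))
          ≤ Real.exp (t * a) * Real.exp (-a / c * (t * c) + (t * c) ^ 2 / 8) :=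
            mul_le_mul_of_nonneg_left hcore (Real.exp_pos _).le
        _ = Real.exp (t ^ 2 * c ^ 2 / 8) := by
            rw [← Real.exp_add]
            congr 1
            field_simp
            ring
    exact hIm.trans hfinal

lemma integrable_of_abs_le' {α : Type*} [MeasurableSpace α] {μ : Measure α} [IsFiniteMeasure μ]
    {h : α → ℝ} (hm : AEStronglyMeasurable h μ) {M : ℝ} (hb : ∀ x, |h x| ≤ M) :
    Integrable h μ :=
  (integrable_const M).mono' hm (Filter.Eventually.of_forall fun x => by
    simpa [Real.norm_eq_abs] using hb x)

lemma abs_integral_le' {α : Type*} [MeasurableSpace α] {μ : Measure α} [IsProbabilityMeasure μ]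
    {h : α → ℝ} (hint : Integrable h μ) {M : ℝ} (hb : ∀ x, |h x| ≤ M) :
    |∫ x, h x ∂μ| ≤ M := by
  calc |∫ x, h x ∂μ| = ‖∫ x, h x ∂μ‖ := (Real.norm_eq_abs _).symm
    _ ≤ ∫ x, ‖h x‖ ∂μ := norm_integral_le_integral_norm h
    _ = ∫ x, |h x| ∂μ := by simp [Real.norm_eq_abs]
    _ ≤ ∫ _x, M ∂μ := integral_mono hint.abs (integrable_const M) hb
    _ = M := by simp



lemma mcdiarmid_mgf0 {𝓧 : Type*} [MeasurableSpace 𝓧] (p : Measure 𝓧) [IsProbabilityMeasure p]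
    (t c M : ℝ) :
    ∀ (n : ℕ) (f : (Fin n → 𝓧) → ℝ), Measurable f → (∀ w, |f w| ≤ M) →
    (∀ (a : Fin n) (w : Fin n → 𝓧) (z : 𝓧), f w - f (Function.update w a z) ≤ c) →
    ∫ w, Real.exp (t * (f w - ∫ v, f v ∂(Measure.pi fun _ : Fin n => p)))
      ∂(Measure.pi fun _ : Fin n => p)
    ≤ Real.exp (t ^ 2 * ((n : ℝ) * c ^ 2) / 8) := by
  intro n
  induction n with
  | zero =>
    intro f _hf _hM _hosc
    have w₀ : Fin 0 → 𝓧 := fun i => i.elim0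
    have hconst : ∀ w : Fin 0 → 𝓧, f w = f w₀ := fun w => congrArg f (Subsingleton.elim w w₀)
    have hEf : ∫ v, f v ∂(Measure.pi fun _ : Fin 0 => p) = f w₀ := by
      rw [show (fun v => f v) = fun _ => f w₀ from funext hconst]
      simp
    calc ∫ w, Real.exp (t * (f w - ∫ v, f v ∂(Measure.pi fun _ : Fin 0 => p)))
          ∂(Measure.pi fun _ : Fin 0 => p)
        = ∫ _w, (1:ℝ) ∂(Measure.pi fun _ : Fin 0 => p) := by
          apply integral_congr_ae (Filter.Eventually.of_forall fun w => ?_)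
          rw [hEf, hconst w, sub_self, mul_zero, Real.exp_zero]
      _ = 1 := by simp
      _ ≤ Real.exp (t ^ 2 * ((0:ℕ) * c ^ 2) / 8) := Real.one_le_exp (by positivity)
  | succ n ih =>
    intro f hf hM hosc
    set πn : Measure (Fin n → 𝓧) := Measure.pi fun _ => p with hπn
    set π1 : Measure (Fin (n+1) → 𝓧) := Measure.pi fun _ => p with hπ1
    set e := MeasurableEquiv.piFinSuccAbove (fun _ : Fin (n+1) => 𝓧) 0 with he
    have MP : MeasurePreserving e π1 (p.prod (Measure.pi fun _ : Fin n => p)) :=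
      measurePreserving_piFinSuccAbove (fun _ : Fin (n+1) => p) 0
    have MPsymm : MeasurePreserving e.symm (p.prod πn) π1 := MP.symm e
    have hesymm : ∀ (x : 𝓧) (v : Fin n → 𝓧), e.symm (x, v) = Fin.cons x v := by
      intro x v
      simp [he, MeasurableEquiv.piFinSuccAbove, Fin.insertNthEquiv_zero, Fin.consEquiv]
    -- transfer of integrals
    have htrans : ∀ G : (Fin (n+1) → 𝓧) → ℝ,
        ∫ w, G w ∂π1 = ∫ y, G (e.symm y) ∂(p.prod πn) := by
      intro G
      exact (MPsymm.integral_comp e.symm.measurableEmbedding G).symm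
    -- basic facts
    have hfmw : Measurable fun y : 𝓧 × (Fin n → 𝓧) => f (e.symm y) := hf.comp e.symm.measurable
    have hcons : ∀ v : Fin n → 𝓧, Measurable fun x : 𝓧 => (Fin.cons x v : Fin (n+1) → 𝓧) := by
      intro v
      rw [measurable_pi_iff]
      intro i
      rcases Fin.eq_zero_or_eq_succ i with rfl | ⟨j, rfl⟩
      · simp only [Fin.cons_zero]; exact measurable_id
      · simp only [Fin.cons_succ]; exact measurable_const
    have hfint : Integrable f π1 := integrable_of_abs_le' hf.aestronglyMeasurable hM
    set g : (Fin n → 𝓧) → ℝ := fun v => ∫ x, f (Fin.cons x v) ∂p with hgdef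
    have hgmeas : Measurable g := by
      have h1 : StronglyMeasurable fun y : 𝓧 × (Fin n → 𝓧) => f (e.symm y) :=
        hfmw.stronglyMeasurable
      have h2 := h1.integral_prod_left' (μ := p)
      have h3 : g = fun v => ∫ x, f (e.symm (x, v)) ∂p := by
        funext v
        exact (integral_congr_ae (Filter.Eventually.of_forall fun x => by rw [hesymm])).symm
      rw [h3]
      exact h2.measurable
    have hintc : ∀ v, Integrable (fun x => f (Fin.cons x v)) p := fun v =>
      integrable_of_abs_le' (hf.comp (hcons v)).aestronglyMeasurable (fun x => hM _)
    have hgM : ∀ v, |g v| ≤ M := fun v => abs_integral_le' (hintc v) (fun x => hM _)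
    have hEfM : |(∫ w, f w ∂π1)| ≤ M := abs_integral_le' hfint hM
    have hgosc : ∀ (j : Fin n) (v : Fin n → 𝓧) (z : 𝓧), g v - g (Function.update v j z) ≤ c := by
      intro j v z
      have hsub := integral_sub (hintc v) (hintc (Function.update v j z))
      have hle : ∫ x, (f (Fin.cons x v) - f (Fin.cons x (Function.update v j z))) ∂p ≤ c := by
        calc ∫ x, (f (Fin.cons x v) - f (Fin.cons x (Function.update v j z))) ∂p
            ≤ ∫ _x, c ∂p := by
              apply integral_mono ((hintc v).sub (hintc _)) (integrable_const c)
              intro x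
              show f (Fin.cons x v) - f (Fin.cons x (Function.update v j z)) ≤ c
              rw [Fin.cons_update]
              exact hosc j.succ (Fin.cons x v : Fin (n+1) → 𝓧) z
          _ = c := by simp
      calc g v - g (Function.update v j z)
          = ∫ x, (f (Fin.cons x v) - f (Fin.cons x (Function.update v j z))) ∂p := hsub.symm
        _ ≤ c := hle
    have hEf_eq : ∫ w, f w ∂π1 = ∫ v, g v ∂πn := by
      rw [htrans f]
      have hprodint : Integrable (fun y : 𝓧 × (Fin n → 𝓧) => f (e.symm y)) (p.prod πn) :=
        integrable_of_abs_le' hfmw.aestronglyMeasurable (fun y => hM _)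
      rw [integral_prod_symm _ hprodint]
      refine integral_congr_ae (Filter.Eventually.of_forall fun v => ?_)
      refine integral_congr_ae (Filter.Eventually.of_forall fun x => ?_)
      simp only [hesymm]
    have hprodint2 : Integrable
        (fun y : 𝓧 × (Fin n → 𝓧) => Real.exp (t * (f (e.symm y) - (∫ w, f w ∂π1)))) (p.prod πn) := by
      apply integrable_of_abs_le' (M := Real.exp (|t| * (M + M)))
        (Real.measurable_exp.comp ((hfmw.sub measurable_const).const_mul t)).aestronglyMeasurable
      intro y
      simp only [Function.comp_apply]
      rw [abs_of_pos (Real.exp_pos _)]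
      apply Real.exp_le_exp.mpr
      have habs : |f (e.symm y) - (∫ w, f w ∂π1)| ≤ M + M := by
        have h1 := hM (e.symm y)
        rw [abs_le] at h1 hEfM ⊢
        constructor <;> linarith [hEfM.1, hEfM.2]
      calc t * (f (e.symm y) - (∫ w, f w ∂π1)) ≤ |t * (f (e.symm y) - (∫ w, f w ∂π1))| := le_abs_self _
        _ = |t| * |f (e.symm y) - (∫ w, f w ∂π1)| := abs_mul _ _
        _ ≤ |t| * (M + M) := mul_le_mul_of_nonneg_left habs (abs_nonneg t)
    have step1 : ∫ w, Real.exp (t * (f w - (∫ w, f w ∂π1))) ∂π1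
        = ∫ v, ∫ x, Real.exp (t * (f (Fin.cons x v) - (∫ w, f w ∂π1))) ∂p ∂πn := by
      rw [htrans (fun w => Real.exp (t * (f w - (∫ w, f w ∂π1))))]
      rw [integral_prod_symm _ hprodint2]
      refine integral_congr_ae (Filter.Eventually.of_forall fun v =>
        integral_congr_ae (Filter.Eventually.of_forall fun x => ?_))
      simp only [hesymm]
    have step2 : ∀ v, ∫ x, Real.exp (t * (f (Fin.cons x v) - (∫ w, f w ∂π1))) ∂p
        ≤ Real.exp (t ^ 2 * c ^ 2 / 8) * Real.exp (t * (g v - (∫ w, f w ∂π1))) := by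
      intro v
      have hZm : AEStronglyMeasurable (fun x => f (Fin.cons x v) - g v) p :=
        ((hf.comp (hcons v)).sub measurable_const).aestronglyMeasurable
      have hmean : ∫ x, (f (Fin.cons x v) - g v) ∂p = 0 := by
        rw [integral_sub (hintc v) (integrable_const _), integral_const]
        simp [hgdef]
      have hoscZ : ∀ x y, (f (Fin.cons x v) - g v) - (f (Fin.cons y v) - g v) ≤ c := by
        intro x y
        have h5 := hosc 0 (Fin.cons x v) y
        rw [Fin.update_cons_zero] at h5
        linarith
      have hhoeff := hoeffding_mgf' p hZm t c hoscZ hmean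
      calc ∫ x, Real.exp (t * (f (Fin.cons x v) - (∫ w, f w ∂π1))) ∂p
          = ∫ x, Real.exp (t * (g v - (∫ w, f w ∂π1))) * Real.exp (t * (f (Fin.cons x v) - g v)) ∂p := by
            refine integral_congr_ae (Filter.Eventually.of_forall fun x => ?_)
            show Real.exp (t * (f (Fin.cons x v) - (∫ w, f w ∂π1)))
              = Real.exp (t * (g v - (∫ w, f w ∂π1))) * Real.exp (t * (f (Fin.cons x v) - g v))
            rw [← Real.exp_add]
            congr 1
            ring
        _ = Real.exp (t * (g v - (∫ w, f w ∂π1))) * ∫ x, Real.exp (t * (f (Fin.cons x v) - g v)) ∂p :=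
            integral_const_mul _ _
        _ ≤ Real.exp (t * (g v - (∫ w, f w ∂π1))) * Real.exp (t ^ 2 * c ^ 2 / 8) :=
            mul_le_mul_of_nonneg_left hhoeff (Real.exp_pos _).le
        _ = Real.exp (t ^ 2 * c ^ 2 / 8) * Real.exp (t * (g v - (∫ w, f w ∂π1))) := mul_comm _ _
    have hinner_int : Integrable
        (fun v => ∫ x, Real.exp (t * (f (Fin.cons x v) - (∫ w, f w ∂π1))) ∂p) πn := by
      apply hprodint2.integral_prod_right.congr
      apply Filter.Eventually.of_forall fun v => ?_
      exact integral_congr_ae (Filter.Eventually.of_forall fun x => by simp only [hesymm])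
    have hgexp_int : Integrable (fun v => Real.exp (t * (g v - (∫ w, f w ∂π1)))) πn := by
      apply integrable_of_abs_le' (M := Real.exp (|t| * (M + M)))
        (Real.measurable_exp.comp ((hgmeas.sub measurable_const).const_mul t)).aestronglyMeasurable
      intro v
      simp only [Function.comp_apply]
      rw [abs_of_pos (Real.exp_pos _)]
      apply Real.exp_le_exp.mpr
      have habs : |g v - (∫ w, f w ∂π1)| ≤ M + M := by
        have h1 := hgM v
        rw [abs_le] at h1 hEfM ⊢
        constructor <;> linarith [hEfM.1, hEfM.2]
      calc t * (g v - (∫ w, f w ∂π1)) ≤ |t * (g v - (∫ w, f w ∂π1))| := le_abs_self _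
        _ = |t| * |g v - (∫ w, f w ∂π1)| := abs_mul _ _
        _ ≤ |t| * (M + M) := mul_le_mul_of_nonneg_left habs (abs_nonneg t)
    calc ∫ w, Real.exp (t * (f w - (∫ w, f w ∂π1))) ∂π1
        = ∫ v, ∫ x, Real.exp (t * (f (Fin.cons x v) - (∫ w, f w ∂π1))) ∂p ∂πn := step1
      _ ≤ ∫ v, Real.exp (t ^ 2 * c ^ 2 / 8) * Real.exp (t * (g v - (∫ w, f w ∂π1))) ∂πn :=
          integral_mono hinner_int (hgexp_int.const_mul _) step2
      _ = Real.exp (t ^ 2 * c ^ 2 / 8) * ∫ v, Real.exp (t * (g v - (∫ w, f w ∂π1))) ∂πn :=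
          integral_const_mul _ _
      _ ≤ Real.exp (t ^ 2 * c ^ 2 / 8) * Real.exp (t ^ 2 * ((n : ℝ) * c ^ 2) / 8) := by
          apply mul_le_mul_of_nonneg_left ?_ (Real.exp_pos _).le
          rw [hEf_eq]
          exact ih g hgmeas hgM hgosc
      _ = Real.exp (t ^ 2 * (((n:ℕ)+1 : ℝ) * c ^ 2) / 8) := by
          rw [← Real.exp_add]
          congr 1
          ring
      _ = Real.exp (t ^ 2 * (((n+1 : ℕ) : ℝ) * c ^ 2) / 8) := by push_cast; ring_nf

lemma integrable_of_abs_le'' {α : Type*} [MeasurableSpace α] {μ : Measure α} [IsFiniteMeasure μ]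
    {h : α → ℝ} (hm : AEStronglyMeasurable h μ) {M : ℝ} (hb : ∀ x, |h x| ≤ M) :
    Integrable h μ :=
  (integrable_const M).mono' hm (Filter.Eventually.of_forall fun x => by
    simpa [Real.norm_eq_abs] using hb x)



lemma mcdiarmid_mgf_fintype {𝓧 : Type*} [MeasurableSpace 𝓧] (p : Measure 𝓧)
    [IsProbabilityMeasure p] {ι : Type*} [Fintype ι] [DecidableEq ι] (f : (ι → 𝓧) → ℝ) (t c M : ℝ)
    (hf : Measurable f) (hM : ∀ w, |f w| ≤ M)
    (hosc : ∀ (a : ι) (w : ι → 𝓧) (z : 𝓧), f w - f (Function.update w a z) ≤ c) :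
    ∫ w, Real.exp (t * (f w - ∫ v, f v ∂(Measure.pi fun _ : ι => p)))
      ∂(Measure.pi fun _ : ι => p)
    ≤ Real.exp (t ^ 2 * ((Fintype.card ι : ℝ) * c ^ 2) / 8) := by
  set n := Fintype.card ι with hn
  set σ : Fin n ≃ ι := (Fintype.equivFin ι).symm with hσ
  set E := MeasurableEquiv.piCongrLeft (fun _ : ι => 𝓧) σ with hE
  have MP : MeasurePreserving E (Measure.pi fun _ : Fin n => p) (Measure.pi fun _ : ι => p) :=
    measurePreserving_piCongrLeft (fun _ : ι => p) σ
  have hEapp : ∀ (w : Fin n → 𝓧) (i : ι), E w i = w (σ.symm i) := by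
    intro w i
    rw [hE, MeasurableEquiv.coe_piCongrLeft]
    conv_lhs => rw [← Equiv.apply_symm_apply σ i]
    rw [Equiv.piCongrLeft_apply_apply]
  have hEupdate : ∀ (w : Fin n → 𝓧) (k : Fin n) (z : 𝓧),
      E (Function.update w k z) = Function.update (E w) (σ k) z := by
    intro w k z
    funext i
    rw [hEapp, Function.update_apply, Function.update_apply]
    by_cases h : i = σ k
    · rw [if_pos h, if_pos (by rw [h, Equiv.symm_apply_apply])]
    · rw [if_neg h, if_neg (fun hc => h (by rw [← hc, Equiv.apply_symm_apply])), hEapp]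
  have htrans : ∀ G : (ι → 𝓧) → ℝ,
      ∫ w, G w ∂(Measure.pi fun _ : ι => p)
        = ∫ x, G (E x) ∂(Measure.pi fun _ : Fin n => p) :=
    fun G => (MP.integral_comp E.measurableEmbedding G).symm
  rw [htrans (fun w => Real.exp (t * (f w - ∫ v, f v ∂(Measure.pi fun _ : ι => p)))),
    htrans f]
  exact mcdiarmid_mgf0 p t c M n (fun x => f (E x)) (hf.comp E.measurable)
    (fun w => hM _)
    (fun k w z => by show f (E w) - f (E (Function.update w k z)) ≤ c
                     rw [hEupdate]; exact hosc (σ k) (E w) z)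

lemma integral_eval_pair {𝓧 : Type*} [MeasurableSpace 𝓧] (p : Measure 𝓧)
    [IsProbabilityMeasure p] {ι : Type*} [Fintype ι] [DecidableEq ι]
    (κ : 𝓧 → 𝓧 → ℝ) (hκ : Measurable (Function.uncurry κ)) {M : ℝ}
    (hbd : ∀ x y, |κ x y| ≤ M) (a b : ι) (hab : a ≠ b) :
    ∫ w, κ (w a) (w b) ∂(Measure.pi fun _ : ι => p) = ∫ x, ∫ y, κ x y ∂p ∂p := by
  have hT : Measurable (fun w : ι → 𝓧 => (w a, w b)) :=
    (measurable_pi_apply a).prodMk (measurable_pi_apply b)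
  have hba : (b = a) → False := fun h => hab h.symm
  have hmap : (Measure.pi fun _ : ι => p).map (fun w => (w a, w b)) = p.prod p := by
    refine (Measure.prod_eq fun s t hs ht => ?_).symm
    rw [Measure.map_apply hT (hs.prod ht)]
    have hpre : (fun w : ι → 𝓧 => (w a, w b)) ⁻¹' (s ×ˢ t)
        = Set.pi Set.univ (fun k => if k = a then s else if k = b then t else Set.univ) := by
      ext w
      simp only [Set.mem_preimage, Set.mem_prod, Set.mem_pi, Set.mem_univ, true_implies]
      constructor
      · rintro ⟨h1, h2⟩ k
        split_ifs with h h'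
        · subst h; exact h1
        · subst h'; exact h2
        · trivial
      · intro h
        constructor
        · have := h a; rwa [if_pos rfl] at this
        · have := h b; rwa [if_neg hba, if_pos rfl] at this
    rw [hpre, Measure.pi_pi]
    have hval : ∀ k : ι, p (if k = a then s else if k = b then t else Set.univ)
        = if k = a then p s else if k = b then p t else 1 := by
      intro k
      split_ifs <;> simp
    simp_rw [hval]
    rw [← Finset.mul_prod_erase Finset.univ _ (Finset.mem_univ a), if_pos rfl,
      ← Finset.mul_prod_erase _ _ (Finset.mem_erase.mpr ⟨fun h => hba h, Finset.mem_univ b⟩),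
      if_neg hba, if_pos rfl, Finset.prod_eq_one, mul_one]
    intro k hk
    rw [Finset.mem_erase, Finset.mem_erase] at hk
    rw [if_neg hk.2.1, if_neg hk.1]
  have hint : Integrable (Function.uncurry κ) (p.prod p) :=
    integrable_of_abs_le'' hκ.aestronglyMeasurable (fun z => hbd z.1 z.2)
  calc ∫ w, κ (w a) (w b) ∂(Measure.pi fun _ : ι => p)
      = ∫ z, Function.uncurry κ z ∂((Measure.pi fun _ : ι => p).map (fun w => (w a, w b))) := by
        rw [integral_map hT.aemeasurable]
        · rfl
        · rw [hmap]; exact hκ.aestronglyMeasurable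
    _ = ∫ z, Function.uncurry κ z ∂(p.prod p) := by rw [hmap]
    _ = ∫ x, ∫ y, κ x y ∂p ∂p := integral_prod _ hint

section osc
variable {𝓧 : Type*} (κ : 𝓧 → 𝓧 → ℝ) (K : ℝ)

lemma pair_term_le (hb : ∀ x y, 0 ≤ κ x y ∧ κ x y ≤ K) (x y x' y' : 𝓧) :
    κ x y - κ x' y' ≤ K := by
  have h1 := hb x y; have h2 := hb x' y'
  linarith [h1.2, h2.1]

lemma sum_erase_diff_le (hb : ∀ x y, 0 ≤ κ x y ∧ κ x y ≤ K) {m : ℕ} (hm : 1 ≤ m)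
    (X X' : Fin m → 𝓧) (i : Fin m) (hXX : ∀ s, s ≠ i → X s = X' s) :
    (∑ s, ∑ j ∈ Finset.univ.erase s, κ (X s) (X j))
      - (∑ s, ∑ j ∈ Finset.univ.erase s, κ (X' s) (X' j)) ≤ 2 * ((m:ℝ) - 1) * K := by
  have hcard : ∀ s : Fin m, ((Finset.univ.erase s).card : ℝ) = (m:ℝ) - 1 := by
    intro s
    rw [Finset.card_erase_of_mem (Finset.mem_univ s), Finset.card_univ, Fintype.card_fin,
      Nat.cast_sub hm, Nat.cast_one]
  rw [← Finset.sum_sub_distrib]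
  simp_rw [← Finset.sum_sub_distrib]
  calc (∑ s, ∑ j ∈ Finset.univ.erase s, (κ (X s) (X j) - κ (X' s) (X' j)))
      ≤ ∑ s, ∑ j ∈ Finset.univ.erase s, (if s = i ∨ j = i then K else 0) := by
        apply Finset.sum_le_sum; intro s _
        apply Finset.sum_le_sum; intro j _
        split_ifs with h
        · exact pair_term_le κ K hb _ _ _ _
        · push_neg at h
          rw [hXX s h.1, hXX j h.2, sub_self]
    _ ≤ ∑ s : Fin m, (if s = i then ((m:ℝ) - 1) * K else K) := by
        apply Finset.sum_le_sum; intro s _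
        apply le_of_eq
        by_cases h : s = i
        · rw [if_pos h]
          calc (∑ j ∈ Finset.univ.erase s, if s = i ∨ j = i then K else 0)
              = ∑ _j ∈ Finset.univ.erase s, K :=
                Finset.sum_congr rfl (fun j _ => if_pos (Or.inl h))
            _ = ((m:ℝ) - 1) * K := by rw [Finset.sum_const, nsmul_eq_mul, hcard]
        · rw [if_neg h]
          have h2 : (∑ j ∈ Finset.univ.erase s, if s = i ∨ j = i then K else 0)
              = ∑ j ∈ Finset.univ.erase s, if j = i then K else 0 := by
            apply Finset.sum_congr rfl; intro j _
            by_cases hj : j = i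
            · rw [if_pos (Or.inr hj), if_pos hj]
            · rw [if_neg (by tauto), if_neg hj]
          rw [h2, Finset.sum_ite_eq' (Finset.univ.erase s) i (fun _ => K),
            if_pos (Finset.mem_erase.mpr ⟨fun hc => h hc.symm, Finset.mem_univ i⟩)]
    _ = 2 * ((m:ℝ) - 1) * K := by
        rw [← Finset.add_sum_erase _ _ (Finset.mem_univ i), if_pos rfl]
        have h3 : ∑ s ∈ Finset.univ.erase i, (if s = i then ((m:ℝ) - 1) * K else K)
            = ∑ _s ∈ Finset.univ.erase i, K :=
          Finset.sum_congr rfl (fun s hs => if_neg (Finset.mem_erase.mp hs).1)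
        rw [h3, Finset.sum_const, nsmul_eq_mul, hcard]
        ring

lemma sum_cross_diff_left (hb : ∀ x y, 0 ≤ κ x y ∧ κ x y ≤ K) {m : ℕ}
    (X X' Y : Fin m → 𝓧) (i : Fin m) (hXX : ∀ s, s ≠ i → X s = X' s) :
    (∑ s, ∑ t, κ (X s) (Y t)) - (∑ s, ∑ t, κ (X' s) (Y t)) ≤ (m:ℝ) * K := by
  rw [← Finset.sum_sub_distrib]
  simp_rw [← Finset.sum_sub_distrib]
  calc (∑ s, ∑ t, (κ (X s) (Y t) - κ (X' s) (Y t)))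
      ≤ ∑ s : Fin m, (if s = i then (m:ℝ) * K else 0) := by
        apply Finset.sum_le_sum; intro s _
        by_cases h : s = i
        · rw [if_pos h]
          calc (∑ t, (κ (X s) (Y t) - κ (X' s) (Y t))) ≤ ∑ _t : Fin m, K :=
              Finset.sum_le_sum (fun t _ => pair_term_le κ K hb _ _ _ _)
            _ = (m:ℝ) * K := by
                rw [Finset.sum_const, Finset.card_univ, Fintype.card_fin, nsmul_eq_mul]
        · rw [if_neg h]
          apply le_of_eq
          apply Finset.sum_eq_zero; intro t _
          rw [hXX s h, sub_self]
    _ = (m:ℝ) * K := by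
        rw [Finset.sum_ite_eq' Finset.univ i (fun _ => (m:ℝ) * K), if_pos (Finset.mem_univ i)]

lemma sum_cross_diff_right (hb : ∀ x y, 0 ≤ κ x y ∧ κ x y ≤ K) {m : ℕ}
    (X Y Y' : Fin m → 𝓧) (i : Fin m) (hYY : ∀ s, s ≠ i → Y s = Y' s) :
    (∑ s, ∑ t, κ (X s) (Y t)) - (∑ s, ∑ t, κ (X s) (Y' t)) ≤ (m:ℝ) * K := by
  rw [← Finset.sum_sub_distrib]
  simp_rw [← Finset.sum_sub_distrib]
  calc (∑ s, ∑ t, (κ (X s) (Y t) - κ (X s) (Y' t)))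
      ≤ ∑ _s : Fin m, K := by
        apply Finset.sum_le_sum; intro s _
        calc (∑ t, (κ (X s) (Y t) - κ (X s) (Y' t)))
            ≤ ∑ t : Fin m, (if t = i then K else 0) := by
              apply Finset.sum_le_sum; intro t _
              by_cases h : t = i
              · rw [if_pos h]; exact pair_term_le κ K hb _ _ _ _
              · rw [if_neg h, hYY t h, sub_self]
          _ = K := by
              rw [Finset.sum_ite_eq' Finset.univ i (fun _ => K), if_pos (Finset.mem_univ i)]
    _ = (m:ℝ) * K := by
        rw [Finset.sum_const, Finset.card_univ, Fintype.card_fin, nsmul_eq_mul]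

lemma sum_erase_bounds (hb : ∀ x y, 0 ≤ κ x y ∧ κ x y ≤ K) {m : ℕ} (hm : 1 ≤ m)
    (X : Fin m → 𝓧) :
    0 ≤ (∑ s, ∑ j ∈ Finset.univ.erase s, κ (X s) (X j)) ∧
    (∑ s, ∑ j ∈ Finset.univ.erase s, κ (X s) (X j)) ≤ (m:ℝ) * ((m:ℝ) - 1) * K := by
  have hcard : ∀ s : Fin m, ((Finset.univ.erase s).card : ℝ) = (m:ℝ) - 1 := by
    intro s
    rw [Finset.card_erase_of_mem (Finset.mem_univ s), Finset.card_univ, Fintype.card_fin,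
      Nat.cast_sub hm, Nat.cast_one]
  constructor
  · exact Finset.sum_nonneg fun s _ => Finset.sum_nonneg fun j _ => (hb _ _).1
  · calc (∑ s, ∑ j ∈ Finset.univ.erase s, κ (X s) (X j))
        ≤ ∑ s : Fin m, (((m:ℝ) - 1) * K) := by
          apply Finset.sum_le_sum; intro s _
          calc (∑ j ∈ Finset.univ.erase s, κ (X s) (X j))
              ≤ ∑ _j ∈ Finset.univ.erase s, K := Finset.sum_le_sum fun j _ => (hb _ _).2
            _ = ((m:ℝ) - 1) * K := by rw [Finset.sum_const, nsmul_eq_mul, hcard]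
      _ = (m:ℝ) * (((m:ℝ) - 1) * K) := by
          rw [Finset.sum_const, Finset.card_univ, Fintype.card_fin, nsmul_eq_mul]
      _ = (m:ℝ) * ((m:ℝ) - 1) * K := by ring

lemma sum_cross_bounds (hb : ∀ x y, 0 ≤ κ x y ∧ κ x y ≤ K) {m : ℕ}
    (X Y : Fin m → 𝓧) :
    0 ≤ (∑ s, ∑ t, κ (X s) (Y t)) ∧
    (∑ s : Fin m, ∑ t : Fin m, κ (X s) (Y t)) ≤ (m:ℝ) * (m:ℝ) * K := by
  constructor
  · exact Finset.sum_nonneg fun s _ => Finset.sum_nonneg fun j _ => (hb _ _).1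
  · calc (∑ s : Fin m, ∑ t : Fin m, κ (X s) (Y t))
        ≤ ∑ _s : Fin m, ((m:ℝ) * K) := by
          apply Finset.sum_le_sum; intro s _
          calc (∑ t : Fin m, κ (X s) (Y t)) ≤ ∑ _t : Fin m, K :=
              Finset.sum_le_sum fun j _ => (hb _ _).2
            _ = (m:ℝ) * K := by
              rw [Finset.sum_const, Finset.card_univ, Fintype.card_fin, nsmul_eq_mul]
      _ = (m:ℝ) * ((m:ℝ) * K) := by
          rw [Finset.sum_const, Finset.card_univ, Fintype.card_fin, nsmul_eq_mul]
      _ = (m:ℝ) * (m:ℝ) * K := by ring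

end osc

noncomputable def mmdSq {𝓧 : Type*} [MeasurableSpace 𝓧]
    (κ : 𝓧 → 𝓧 → ℝ) (p q : Measure 𝓧) : ℝ :=
  (∫ x, ∫ x', κ x x' ∂p ∂p) - 2 * (∫ x, ∫ y, κ x y ∂q ∂p)
    + (∫ y, ∫ y', κ y y' ∂q ∂q)

noncomputable def mmdU {𝓧 : Type*} (κ : 𝓧 → 𝓧 → ℝ)
    {ι₁ ι₂ : Type*} [Fintype ι₁] [Fintype ι₂] [DecidableEq ι₁] [DecidableEq ι₂]
    (X : ι₁ → 𝓧) (Y : ι₂ → 𝓧) : ℝ :=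
  (1 / ((Fintype.card ι₁ : ℝ) * ((Fintype.card ι₁ : ℝ) - 1))) *
      ∑ i : ι₁, ∑ j ∈ Finset.univ.erase i, κ (X i) (X j)
    + (1 / ((Fintype.card ι₂ : ℝ) * ((Fintype.card ι₂ : ℝ) - 1))) *
      ∑ i : ι₂, ∑ j ∈ Finset.univ.erase i, κ (Y i) (Y j)
    - (2 / ((Fintype.card ι₁ : ℝ) * (Fintype.card ι₂ : ℝ))) *
      ∑ i : ι₁, ∑ j : ι₂, κ (X i) (Y j)

/-- One-sided concentration for a normal sequence (upper tail). -/








theorem normal_upper_tail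
    {𝓧 : Type*} [MeasurableSpace 𝓧]
    (κ : 𝓧 → 𝓧 → ℝ) (K : ℝ)
    (hκ : Measurable (Function.uncurry κ)) (hb : ∀ x y, 0 ≤ κ x y ∧ κ x y ≤ K)
    (p : Measure 𝓧) [IsProbabilityMeasure p]
    {m : ℕ} (hm : 2 ≤ m)
    {Ω : Type*} [MeasurableSpace Ω] (P : Measure Ω) [IsProbabilityMeasure P]
    (X : Ω → Fin m → 𝓧) (Y : Ω → Fin m → 𝓧)
    (hX : Measurable X) (hY : Measurable Y)
    (hlaw : Measure.map (fun ω => (X ω, Y ω)) P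
      = (Measure.pi fun _ : Fin m => p).prod (Measure.pi fun _ : Fin m => p))
    (δ : ℝ) (hδ : 0 < δ) :
    P {ω | mmdU κ (X ω) (Y ω) > δ}
      ≤ ENNReal.ofReal (Real.exp (-(m : ℝ) * δ ^ 2 / (16 * K ^ 2))) := by
  haveI hne : Nonempty 𝓧 := by
    by_contra hh
    rw [not_nonempty_iff] at hh
    have h1 : p Set.univ = 1 := measure_univ
    rw [Set.univ_eq_empty_iff.mpr hh, measure_empty] at h1
    exact zero_ne_one h1
  obtain ⟨x₀⟩ := id hne
  have hK0 : 0 ≤ K := le_trans (hb x₀ x₀).1 (hb x₀ x₀).2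
  rcases eq_or_lt_of_le hK0 with hK | hK
  · -- K = 0, kernel is identically zero
    have hκ0 : ∀ x y, κ x y = 0 := fun x y => le_antisymm (hK ▸ (hb x y).2) (hb x y).1
    have hev : {ω | mmdU κ (X ω) (Y ω) > δ} = ∅ := by
      ext ω
      simp only [Set.mem_setOf_eq, Set.mem_empty_iff_false, iff_false, not_lt, gt_iff_lt]
      have h0 : mmdU κ (X ω) (Y ω) = 0 := by simp [mmdU, hκ0]
      rw [h0]
      exact hδ.le
    rw [hev, measure_empty]
    exact zero_le
  · -- main case: K > 0
    have hm1 : 1 ≤ m := le_trans one_le_two hm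
    have hmR2 : (2:ℝ) ≤ (m:ℝ) := by exact_mod_cast hm
    have hmR : (0:ℝ) < m := by linarith
    have hmR1 : (0:ℝ) < (m:ℝ) - 1 := by linarith
    have hc1p : (0:ℝ) < 1 / ((m:ℝ) * ((m:ℝ) - 1)) := by positivity
    have hc2p : (0:ℝ) < 2 / ((m:ℝ) * (m:ℝ)) := by positivity
    have hκabs : ∀ x y, |κ x y| ≤ K := fun x y =>
      abs_le.mpr ⟨by linarith [(hb x y).1], (hb x y).2⟩
    set J := ∫ x, ∫ y, κ x y ∂p ∂p with hJ
    set π : Measure ((Fin m ⊕ Fin m) → 𝓧) := Measure.pi fun _ => p with hπ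
    set G : ((Fin m ⊕ Fin m) → 𝓧) → ℝ :=
      fun w => mmdU κ (fun i => w (Sum.inl i)) (fun j => w (Sum.inr j)) with hGdef
    have hGeq : ∀ w, G w =
        (1 / ((m:ℝ) * ((m:ℝ) - 1))) *
            (∑ i, ∑ j ∈ Finset.univ.erase i, κ (w (Sum.inl i)) (w (Sum.inl j)))
          + (1 / ((m:ℝ) * ((m:ℝ) - 1))) *
            (∑ i, ∑ j ∈ Finset.univ.erase i, κ (w (Sum.inr i)) (w (Sum.inr j)))
          - (2 / ((m:ℝ) * (m:ℝ))) *
            (∑ i, ∑ j, κ (w (Sum.inl i)) (w (Sum.inr j))) := by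
      intro w
      simp [hGdef, mmdU, Fintype.card_fin]
    have hκab : ∀ a b : Fin m ⊕ Fin m,
        Measurable (fun w : (Fin m ⊕ Fin m) → 𝓧 => κ (w a) (w b)) := by
      intro a b
      show Measurable (Function.uncurry κ ∘ fun w : (Fin m ⊕ Fin m) → 𝓧 => (w a, w b))
      exact hκ.comp ((measurable_pi_apply a).prodMk (measurable_pi_apply b))
    have hGmeas : Measurable G := by
      rw [show G = _ from funext hGeq]
      apply Measurable.sub
      apply Measurable.add
      · exact (Finset.measurable_sum _ fun i _ =>
          Finset.measurable_sum _ fun j _ => hκab _ _).const_mul _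
      · exact (Finset.measurable_sum _ fun i _ =>
          Finset.measurable_sum _ fun j _ => hκab _ _).const_mul _
      · exact (Finset.measurable_sum _ fun i _ =>
          Finset.measurable_sum _ fun j _ => hκab _ _).const_mul _
    -- bound on G
    have hGbd : ∀ w, |G w| ≤ 4 * K := by
      intro w
      rw [hGeq w]
      obtain ⟨h10, h11⟩ := sum_erase_bounds κ K hb hm1 (fun i => w (Sum.inl i))
      obtain ⟨h20, h21⟩ := sum_erase_bounds κ K hb hm1 (fun i => w (Sum.inr i))
      obtain ⟨h30, h31⟩ := sum_cross_bounds κ K hb (fun i => w (Sum.inl i)) (fun j => w (Sum.inr j))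
      have e1 : (1 / ((m:ℝ) * ((m:ℝ) - 1))) * ((m:ℝ) * ((m:ℝ) - 1) * K) = K := by
        field_simp
      have e2 : (2 / ((m:ℝ) * (m:ℝ))) * ((m:ℝ) * (m:ℝ) * K) = 2 * K := by
        field_simp
      have u1 := mul_le_mul_of_nonneg_left h11 hc1p.le
      have u2 := mul_le_mul_of_nonneg_left h21 hc1p.le
      have u3 := mul_le_mul_of_nonneg_left h31 hc2p.le
      have l1 := mul_nonneg hc1p.le h10
      have l2 := mul_nonneg hc1p.le h20
      have l3 := mul_nonneg hc2p.le h30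
      rw [abs_le]
      constructor <;> nlinarith [e1, e2]
    -- oscillation of G
    have hGosc : ∀ (a : Fin m ⊕ Fin m) (w : (Fin m ⊕ Fin m) → 𝓧) (z : 𝓧),
        G w - G (Function.update w a z) ≤ 4 * K / (m:ℝ) := by
      intro a w z
      set w' := Function.update w a z with hw'
      have e3 : (1 / ((m:ℝ) * ((m:ℝ) - 1))) * (2 * ((m:ℝ) - 1) * K)
          + (2 / ((m:ℝ) * (m:ℝ))) * ((m:ℝ) * K) = 4 * K / (m:ℝ) := by
        field_simp
        ring
      cases a with
      | inl i =>
        have hYeq : ∀ j, w' (Sum.inr j) = w (Sum.inr j) := fun j =>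
          Function.update_of_ne (by simp) z w
        have hXX : ∀ s, s ≠ i → w (Sum.inl s) = w' (Sum.inl s) := fun s hs =>
          (Function.update_of_ne (fun hc => hs (Sum.inl.inj hc)) z w).symm
        have d1 := sum_erase_diff_le κ K hb hm1 (fun s => w (Sum.inl s))
          (fun s => w' (Sum.inl s)) i hXX
        have d3 := sum_cross_diff_left κ K hb (fun s => w' (Sum.inl s))
          (fun s => w (Sum.inl s)) (fun j => w (Sum.inr j)) i (fun s hs => (hXX s hs).symm)
        rw [hGeq w, hGeq w']
        simp only [hYeq]
        have t1 := mul_le_mul_of_nonneg_left d1 hc1p.le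
        have t2 := mul_le_mul_of_nonneg_left d3 hc2p.le
        linarith [t1, t2, e3]
      | inr i =>
        have hXeq : ∀ j, w' (Sum.inl j) = w (Sum.inl j) := fun j =>
          Function.update_of_ne (by simp) z w
        have hYY : ∀ s, s ≠ i → w (Sum.inr s) = w' (Sum.inr s) := fun s hs =>
          (Function.update_of_ne (fun hc => hs (Sum.inr.inj hc)) z w).symm
        have d2 := sum_erase_diff_le κ K hb hm1 (fun s => w (Sum.inr s))
          (fun s => w' (Sum.inr s)) i hYY
        have d3 := sum_cross_diff_right κ K hb (fun s => w (Sum.inl s))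
          (fun j => w' (Sum.inr j)) (fun j => w (Sum.inr j)) i (fun s hs => (hYY s hs).symm)
        rw [hGeq w, hGeq w']
        simp only [hXeq]
        have t1 := mul_le_mul_of_nonneg_left d2 hc1p.le
        have t2 := mul_le_mul_of_nonneg_left d3 hc2p.le
        linarith [t1, t2, e3]
    -- expectation of G is zero
    have hInt : ∀ a b : Fin m ⊕ Fin m, Integrable (fun w => κ (w a) (w b)) π :=
      fun a b => integrable_of_abs_le'' (hκab a b).aestronglyMeasurable (fun w => hκabs _ _)
    have hpair : ∀ a b : Fin m ⊕ Fin m, a ≠ b →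
        ∫ w, κ (w a) (w b) ∂π = J :=
      fun a b hab => integral_eval_pair p κ hκ hκabs a b hab
    have hcardR : ∀ i : Fin m, ((Finset.univ.erase i).card : ℝ) = (m:ℝ) - 1 := by
      intro i
      rw [Finset.card_erase_of_mem (Finset.mem_univ i), Finset.card_univ, Fintype.card_fin,
        Nat.cast_sub hm1, Nat.cast_one]
    have hS1 : ∀ (F : Fin m → Fin m ⊕ Fin m) (hF : ∀ i j : Fin m, i ≠ j → F i ≠ F j),
        ∫ w, (∑ i, ∑ j ∈ Finset.univ.erase i, κ (w (F i)) (w (F j))) ∂π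
          = (m:ℝ) * ((m:ℝ) - 1) * J := by
      intro F hF
      rw [integral_finset_sum _ (fun i _ => integrable_finset_sum _ (fun j _ => hInt _ _))]
      have h4 : ∀ i : Fin m,
          ∫ w, (∑ j ∈ Finset.univ.erase i, κ (w (F i)) (w (F j))) ∂π
            = ((m:ℝ) - 1) * J := by
        intro i
        rw [integral_finset_sum _ (fun j _ => hInt _ _)]
        have h5 : ∀ j ∈ Finset.univ.erase i, ∫ w, κ (w (F i)) (w (F j)) ∂π = J := by
          intro j hj
          exact hpair (F i) (F j) (hF i j (fun hc => (Finset.mem_erase.mp hj).1 hc.symm))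
        rw [Finset.sum_congr rfl h5, Finset.sum_const, nsmul_eq_mul, hcardR]
      rw [Finset.sum_congr rfl (fun i _ => h4 i), Finset.sum_const, Finset.card_univ,
        Fintype.card_fin, nsmul_eq_mul]
      ring
    have hS3 : ∫ w, (∑ i, ∑ j, κ (w (Sum.inl i)) (w (Sum.inr j))) ∂π
        = (m:ℝ) * (m:ℝ) * J := by
      rw [integral_finset_sum _ (fun i _ => integrable_finset_sum _ (fun j _ => hInt _ _))]
      have h4 : ∀ i : Fin m,
          ∫ w, (∑ j, κ (w (Sum.inl i)) (w (Sum.inr j))) ∂π = (m:ℝ) * J := by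
        intro i
        rw [integral_finset_sum _ (fun j _ => hInt _ _)]
        have h5 : ∀ j ∈ (Finset.univ : Finset (Fin m)),
            ∫ w, κ (w (Sum.inl i)) (w (Sum.inr j)) ∂π = J :=
          fun j _ => hpair (Sum.inl i) (Sum.inr j) (by simp)
        rw [Finset.sum_congr rfl h5, Finset.sum_const, Finset.card_univ, Fintype.card_fin,
          nsmul_eq_mul]
      rw [Finset.sum_congr rfl (fun i _ => h4 i), Finset.sum_const, Finset.card_univ,
        Fintype.card_fin, nsmul_eq_mul]
      ring
    have hEG : ∫ w, G w ∂π = 0 := by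
      rw [show G = _ from funext hGeq]
      have i1 : Integrable (fun w : (Fin m ⊕ Fin m) → 𝓧 => (1 / ((m:ℝ) * ((m:ℝ) - 1))) *
          (∑ i, ∑ j ∈ Finset.univ.erase i, κ (w (Sum.inl i)) (w (Sum.inl j)))) π :=
        (integrable_finset_sum _ (fun i _ =>
          integrable_finset_sum _ (fun j _ => hInt _ _))).const_mul _
      have i2 : Integrable (fun w : (Fin m ⊕ Fin m) → 𝓧 => (1 / ((m:ℝ) * ((m:ℝ) - 1))) *
          (∑ i, ∑ j ∈ Finset.univ.erase i, κ (w (Sum.inr i)) (w (Sum.inr j)))) π :=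
        (integrable_finset_sum _ (fun i _ =>
          integrable_finset_sum _ (fun j _ => hInt _ _))).const_mul _
      have i3 : Integrable (fun w : (Fin m ⊕ Fin m) → 𝓧 => (2 / ((m:ℝ) * (m:ℝ))) *
          (∑ i, ∑ j, κ (w (Sum.inl i)) (w (Sum.inr j)))) π :=
        (integrable_finset_sum _ (fun i _ =>
          integrable_finset_sum _ (fun j _ => hInt _ _))).const_mul _
      have i12 : Integrable (fun w : (Fin m ⊕ Fin m) → 𝓧 =>
          (1 / ((m:ℝ) * ((m:ℝ) - 1))) *
            (∑ i, ∑ j ∈ Finset.univ.erase i, κ (w (Sum.inl i)) (w (Sum.inl j)))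
          + (1 / ((m:ℝ) * ((m:ℝ) - 1))) *
            (∑ i, ∑ j ∈ Finset.univ.erase i, κ (w (Sum.inr i)) (w (Sum.inr j)))) π := i1.add i2
      rw [integral_sub i12 i3, integral_add i1 i2, integral_const_mul,
        integral_const_mul, integral_const_mul]
      rw [hS1 (fun i => Sum.inl i) (fun i j hij hc => hij (Sum.inl.inj hc)),
        hS1 (fun i => Sum.inr i) (fun i j hij hc => hij (Sum.inr.inj hc)), hS3]
      field_simp
      ring
    -- Chernoff bound
    set t0 : ℝ := (m:ℝ) * δ / (8 * K ^ 2) with ht0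
    have ht0nn : 0 ≤ t0 := by positivity
    have hexpint : Integrable (fun w => Real.exp (t0 * G w)) π := by
      apply integrable_of_abs_le'' (M := Real.exp (|t0| * (4 * K)))
        (Real.measurable_exp.comp (hGmeas.const_mul t0)).aestronglyMeasurable
      intro w
      simp only [Function.comp_apply]
      rw [abs_of_pos (Real.exp_pos _)]
      apply Real.exp_le_exp.mpr
      calc t0 * G w ≤ |t0 * G w| := le_abs_self _
        _ = |t0| * |G w| := abs_mul _ _
        _ ≤ |t0| * (4 * K) := mul_le_mul_of_nonneg_left (hGbd w) (abs_nonneg _)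
    have hchern := measure_ge_le_exp_mul_mgf (μ := π) (X := G) δ ht0nn hexpint
    have hmgfeq : mgf G π t0 = ∫ w, Real.exp (t0 * G w) ∂π := rfl
    have hmgf : mgf G π t0
        ≤ Real.exp (t0 ^ 2 * (((m:ℝ) + (m:ℝ)) * (4 * K / (m:ℝ)) ^ 2) / 8) := by
      have h6 := mcdiarmid_mgf_fintype p G t0 (4 * K / (m:ℝ)) (4 * K) hGmeas hGbd hGosc
      rw [← hπ] at h6
      simp only [hEG, sub_zero] at h6
      rw [hmgfeq]
      convert h6 using 3
      rw [Fintype.card_sum, Fintype.card_fin]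
      push_cast
      ring
    have hnum : Real.exp (-t0 * δ) *
        Real.exp (t0 ^ 2 * (((m:ℝ) + (m:ℝ)) * (4 * K / (m:ℝ)) ^ 2) / 8)
        = Real.exp (-(m:ℝ) * δ ^ 2 / (16 * K ^ 2)) := by
      rw [← Real.exp_add]
      congr 1
      rw [ht0]
      field_simp
      ring
    -- event identification
    have hpairmeas : Measurable (fun z : (Fin m → 𝓧) × (Fin m → 𝓧) => mmdU κ z.1 z.2) := by
      have hzz : (fun z : (Fin m → 𝓧) × (Fin m → 𝓧) => mmdU κ z.1 z.2)
          = fun z => G ((MeasurableEquiv.sumPiEquivProdPi (fun _ : Fin m ⊕ Fin m => 𝓧)).symm z) := by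
        funext z
        rfl
      rw [hzz]
      exact hGmeas.comp (MeasurableEquiv.sumPiEquivProdPi _).symm.measurable
    have hSmeas : MeasurableSet {z : (Fin m → 𝓧) × (Fin m → 𝓧) | mmdU κ z.1 z.2 > δ} :=
      measurableSet_lt measurable_const hpairmeas
    have hA : P {ω | mmdU κ (X ω) (Y ω) > δ}
        = ((Measure.pi fun _ : Fin m => p).prod (Measure.pi fun _ : Fin m => p))
            {z | mmdU κ z.1 z.2 > δ} := by
      rw [← hlaw, Measure.map_apply (hX.prodMk hY) hSmeas]
      rfl
    have hMP := measurePreserving_sumPiEquivProdPi (fun _ : Fin m ⊕ Fin m => p)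
    have hB : ((Measure.pi fun _ : Fin m => p).prod (Measure.pi fun _ : Fin m => p))
            {z | mmdU κ z.1 z.2 > δ} = π {w | G w > δ} := by
      rw [← hMP.map_eq, Measure.map_apply hMP.measurable hSmeas]
      congr 1
    have htoreal : (π {w | G w > δ}).toReal ≤ Real.exp (-(m:ℝ) * δ ^ 2 / (16 * K ^ 2)) := by
      have hsub : {w | G w > δ} ⊆ {ω | δ ≤ G ω} := fun w hw => Set.mem_setOf_eq ▸ le_of_lt hw
      have hmono : (π {w | G w > δ}).toReal ≤ (π {ω | δ ≤ G ω}).toReal := by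
        apply ENNReal.toReal_mono (measure_ne_top _ _) (measure_mono hsub)
      calc (π {w | G w > δ}).toReal ≤ (π {ω | δ ≤ G ω}).toReal := hmono
        _ ≤ Real.exp (-t0 * δ) * mgf G π t0 := hchern
        _ ≤ Real.exp (-t0 * δ) *
              Real.exp (t0 ^ 2 * (((m:ℝ) + (m:ℝ)) * (4 * K / (m:ℝ)) ^ 2) / 8) :=
            mul_le_mul_of_nonneg_left hmgf (Real.exp_pos _).le
        _ = Real.exp (-(m:ℝ) * δ ^ 2 / (16 * K ^ 2)) := hnum
    rw [hA, hB]
    exact (ENNReal.le_ofReal_iff_toReal_le (measure_ne_top _ _) (Real.exp_pos _).le).mpr htoreal
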